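/- Let ρ and ρ_E be d×d complex density matrices, let p₀, p₁ ≥ 0 with p₀ + p₁ = 1 and p₀ ≤ p₁, and let η ∈ [0,1] satisfy η ≤ 1 − p₀/p₁ (equivalently γ := p₁(1−η) − p₀ ≥ 0). Then the matrix Ω_c := p₁η·ρ + γ·ρ_E is positive semidefinite and its trace norm equals p₁ − p₀; consequently the minimum-error probability P_err = (1 − ‖Ω_c‖₁)/2 equals p₀, for every (pure or mixed) signal state ρ. -/

import Mathlib

open Matrix BigOperators Kronecker ComplexOrder

/-- The trace norm of a Hermitian matrix: the sum of the absolute values of its eigenvalues. -/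
noncomputable def traceNorm {n : Type*} [Fintype n] [DecidableEq n]
    {A : Matrix n n ℂ} (hA : A.IsHermitian) : ℝ :=
  ∑ i, |hA.eigenvalues i|

lemma trace_eq_sum_eigenvalues' {n : Type*} [Fintype n] [DecidableEq n]
    {A : Matrix n n ℂ} (hA : A.IsHermitian) :
    A.trace = ∑ i, (hA.eigenvalues i : ℂ) := by
  exact hA.trace_eq_sum_eigenvalues

lemma posSemidef_real_smul {n : Type*} [Fintype n] {A : Matrix n n ℂ}
    (hA : A.PosSemidef) {c : ℝ} (hc : 0 ≤ c) : (c • A).PosSemidef := by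
  have h : c • A = (c : ℂ) • A := by
    ext i j
    simp [Complex.real_smul]
  rw [h]
  refine Matrix.posSemidef_iff_dotProduct_mulVec.mpr ⟨?_, fun x => ?_⟩
  · show ((c : ℂ) • A)ᴴ = (c : ℂ) • A
    rw [Matrix.conjTranspose_smul, hA.1.eq, Complex.star_def, Complex.conj_ofReal]
  rw [Matrix.smul_mulVec, dotProduct_smul, smul_eq_mul]
  exact mul_nonneg (by exact_mod_cast hc) ((Matrix.posSemidef_iff_dotProduct_mulVec.mp hA).2 x)

/-- **Region I, conventional illumination.** If `p₀ ≤ p₁` and `γ := p₁(1-η) - p₀ ≥ 0`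
(equivalently `η ≤ 1 - p₀/p₁`), then `Ω_c = p₁η·ρ + γ·ρE` is positive semidefinite, its
trace norm equals `p₁ - p₀`, and the minimum-error probability `(1 - ‖Ω_c‖₁)/2` equals `p₀`,
for every (pure or mixed) signal state `ρ`. -/
theorem region_I_conventional {d : ℕ}
    (ρ ρE : Matrix (Fin d) (Fin d) ℂ)
    (hρ : ρ.PosSemidef) (hρtr : ρ.trace = 1)
    (hE : ρE.PosSemidef) (hEtr : ρE.trace = 1)
    (p₀ p₁ η : ℝ) (hp₀ : 0 ≤ p₀) (hp₁ : 0 ≤ p₁) (hsum : p₀ + p₁ = 1)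
    (hp : p₀ ≤ p₁) (hη₀ : 0 ≤ η) (hη₁ : η ≤ 1)
    (hγ : 0 ≤ p₁ * (1 - η) - p₀)
    (hΩ : ((p₁ * η) • ρ + (p₁ * (1 - η) - p₀) • ρE).IsHermitian) :
    ((p₁ * η) • ρ + (p₁ * (1 - η) - p₀) • ρE).PosSemidef ∧
      traceNorm hΩ = p₁ - p₀ ∧
      (1 - traceNorm hΩ) / 2 = p₀ := by
  have hpsd : ((p₁ * η) • ρ + (p₁ * (1 - η) - p₀) • ρE).PosSemidef :=
    (posSemidef_real_smul hρ (mul_nonneg hp₁ hη₀)).add (posSemidef_real_smul hE hγ)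
  have htrace : ((p₁ * η) • ρ + (p₁ * (1 - η) - p₀) • ρE).trace = ((p₁ - p₀ : ℝ) : ℂ) := by
    rw [Matrix.trace_add, Matrix.trace_smul, Matrix.trace_smul, hρtr, hEtr]
    push_cast [Complex.real_smul]
    ring
  have htn : traceNorm hΩ = p₁ - p₀ := by
    have h1 : traceNorm hΩ = ∑ i, hΩ.eigenvalues i := by
      unfold traceNorm
      refine Finset.sum_congr rfl fun i _ => abs_of_nonneg ?_
      exact hpsd.eigenvalues_nonneg i
    have h2 := trace_eq_sum_eigenvalues' hΩ
    rw [htrace] at h2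
    have h3 : ((p₁ - p₀ : ℝ) : ℂ).re = (∑ i, (hΩ.eigenvalues i : ℂ)).re := by rw [h2]
    rw [h1]
    simpa [Complex.re_sum] using h3.symm
  exact ⟨hpsd, htn, by rw [htn]; linarith⟩
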